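/- Let x, d, b be integers with gcd(x,d) = 1 and suppose 3x^4 + 20x^2 d^2 + 10 d^4 = gcd(x,10) · b^2. Then 10 divides x (equivalently, gcd(x,10) = 10). -/

import Mathlib

lemma aux1 : ∀ a d b : ZMod 5, a ≠ 0 → 3*a^4+20*a^2*d^2+10*d^4 ≠ b^2 := by decide

lemma aux2 : ∀ y e b : ZMod 16, 3*(2*y)^4+20*(2*y)^2*(2*e+1)^2+10*(2*e+1)^4 ≠ 2*b^2 := by decide

lemma aux3 : ∀ y d b : ZMod 8, 3*(2*y+1)^4+20*(2*y+1)^2*d^2+10*d^4 ≠ 5*b^2 := by decide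

theorem stmt_8 (x d b : ℤ) (hgcd : Int.gcd x d = 1)
    (heq : 3 * x ^ 4 + 20 * x ^ 2 * d ^ 2 + 10 * d ^ 4 = (Int.gcd x 10 : ℤ) * b ^ 2) :
    (10 : ℤ) ∣ x := by
  set g : ℕ := Int.gcd x 10 with hg
  have hgx : (g : ℤ) ∣ x := Int.gcd_dvd_left x 10
  have hg10 : (g : ℤ) ∣ 10 := Int.gcd_dvd_right x 10
  have hgn : g ∣ 10 := by exact_mod_cast hg10
  have hgcases : g = 1 ∨ g = 2 ∨ g = 5 ∨ g = 10 := by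
    have h1 := Nat.le_of_dvd (by norm_num) hgn
    interval_cases g <;> revert hgn <;> decide
  -- helper facts
  have h2x : (2:ℤ) ∣ x → 2 ∣ g := by
    intro h
    have : (2:ℤ) ∣ (g : ℤ) := Int.dvd_coe_gcd h (by norm_num)
    exact_mod_cast this
  have h5x : (5:ℤ) ∣ x → 5 ∣ g := by
    intro h
    have : (5:ℤ) ∣ (g : ℤ) := Int.dvd_coe_gcd h (by norm_num)
    exact_mod_cast this
  rcases hgcases with h | h | h | h
  · -- g = 1 : contradiction mod 5
    exfalso
    have hx5 : ¬ (5:ℤ) ∣ x := fun hd => by simp [h] at h5x; omega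
    rw [h] at heq
    have hc := congrArg (fun t : ℤ => (t : ZMod 5)) heq
    push_cast at hc
    have hx0 : (x : ZMod 5) ≠ 0 := by
      rwa [Ne, ZMod.intCast_zmod_eq_zero_iff_dvd]
    rw [one_mul] at hc; exact aux1 _ _ _ hx0 hc
  · -- g = 2 : contradiction mod 16
    exfalso
    have hx2 : (2:ℤ) ∣ x := by
      have : (2:ℤ) ∣ (g:ℤ) := by rw [h]; norm_num
      exact this.trans hgx
    have hd2 : ¬ (2:ℤ) ∣ d := by
      intro hd
      have : (2:ℤ) ∣ (Int.gcd x d : ℤ) := Int.dvd_coe_gcd hx2 hd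
      rw [hgcd] at this
      norm_num at this
    obtain ⟨y, hy⟩ := hx2
    obtain ⟨e, he⟩ : ∃ e, d = 2*e + 1 := by
      rcases Int.even_or_odd d with ⟨k, hk⟩ | ⟨k, hk⟩
      · exact absurd ⟨k, by omega⟩ hd2
      · exact ⟨k, hk⟩
    rw [h, hy, he] at heq
    have hc := congrArg (fun t : ℤ => (t : ZMod 16)) heq
    push_cast at hc
    exact aux2 _ _ _ hc
  · -- g = 5 : contradiction mod 8
    exfalso
    have hx5 : (5:ℤ) ∣ x := by
      have : (5:ℤ) ∣ (g:ℤ) := by rw [h]; norm_num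
      exact this.trans hgx
    have hx2 : ¬ (2:ℤ) ∣ x := by
      intro hd
      have := h2x hd
      omega
    obtain ⟨y, hy⟩ : ∃ y, x = 2*y + 1 := by
      rcases Int.even_or_odd x with ⟨k, hk⟩ | ⟨k, hk⟩
      · exact absurd ⟨k, by omega⟩ hx2
      · exact ⟨k, hk⟩
    rw [h, hy] at heq
    have hc := congrArg (fun t : ℤ => (t : ZMod 8)) heq
    push_cast at hc
    exact aux3 _ _ _ hc
  · -- g = 10
    have : (10:ℤ) ∣ (g:ℤ) := by rw [h]; norm_num
    exact this.trans hgx
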